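/- Let Γ be a relevant collection that is not hke and is of minimal cardinality among non-KE subcollections (so Γ−{S} is hke for every S ∈ Γ, but Γ is not KE). Then for every partition {Γ₁,Γ₂} of Γ into two non-empty subcollections, |⋂Γ₁ − ⋃Γ₂| ≠ |⋂Γ₂ − ⋃Γ₁|. -/
import Mathlib


open Finset

/-- Union of a finite collection of finite sets. -/
def collU {α : Type*} [DecidableEq α] (Γ : Finset (Finset α)) : Finset α :=
  Γ.sup id

/-- Intersection of a finite collection of finite sets
(equals the usual intersection when the collection is non-empty). -/
def collI {α : Type*} [DecidableEq α] (Γ : Finset (Finset α)) : Finset α :=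
  (Γ.sup id).filter (fun x => ∀ S ∈ Γ, x ∈ S)

/-- `e Γ = |⋃Γ| + |⋂Γ|` as an integer. -/
def collE {α : Type*} [DecidableEq α] (Γ : Finset (Finset α)) : ℤ :=
  (collU Γ).card + (collI Γ).card

/-- `F` is a hereditary König–Egerváry collection with common cardinality `a`. -/
def IsHKE {α : Type*} [DecidableEq α] (F : Finset (Finset α)) (a : ℕ) : Prop :=
  (∀ S ∈ F, S.card = a) ∧
  ∀ Γ ⊆ F, Γ.Nonempty → collE Γ = 2 * (a : ℤ)

/-- The duality defect of a partition, as an integer. -/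
def collD {α : Type*} [DecidableEq α] (Γ₁ Γ₂ : Finset (Finset α)) : ℤ :=
  ((collI Γ₂ \ collU Γ₁).card : ℤ) - ((collI Γ₁ \ collU Γ₂).card : ℤ)

lemma collU_insert {α : Type*} [DecidableEq α] (T : Finset α) (Γ : Finset (Finset α)) :
    collU (insert T Γ) = T ∪ collU Γ := by
  simp [collU, Finset.sup_insert]

lemma mem_collI {α : Type*} [DecidableEq α] {Γ : Finset (Finset α)} (h : Γ.Nonempty)
    {x : α} : x ∈ collI Γ ↔ ∀ S ∈ Γ, x ∈ S := by
  constructor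
  · intro hx
    exact (Finset.mem_filter.1 hx).2
  · intro hx
    obtain ⟨S₀, hS₀⟩ := h
    refine Finset.mem_filter.2 ⟨?_, hx⟩
    exact (Finset.le_sup (f := id) hS₀ : S₀ ⊆ Γ.sup id) (hx S₀ hS₀)

lemma collI_insert {α : Type*} [DecidableEq α] {Γ : Finset (Finset α)} (h : Γ.Nonempty)
    (T : Finset α) : collI (insert T Γ) = T ∩ collI Γ := by
  ext x
  rw [Finset.mem_inter, mem_collI (Finset.insert_nonempty T Γ), mem_collI h]
  simp

lemma collI_singleton {α : Type*} [DecidableEq α] (T : Finset α) :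
    collI ({T} : Finset (Finset α)) = T := by
  ext x
  rw [mem_collI (Finset.singleton_nonempty T)]
  simp

lemma collU_singleton {α : Type*} [DecidableEq α] (T : Finset α) :
    collU ({T} : Finset (Finset α)) = T := by
  simp [collU]

lemma IsHKE.subset {α : Type*} [DecidableEq α] {F F' : Finset (Finset α)} {a : ℕ}
    (h : IsHKE F a) (hs : F' ⊆ F) : IsHKE F' a :=
  ⟨fun S hS => h.1 S (hs hS), fun Δ hΔ hne => h.2 Δ (hΔ.trans hs) hne⟩

/-- key cancellation: `|(T∩B)∖U| + |B∖(T∪U)| = |B∖U|`. -/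
lemma card_split {α : Type*} [DecidableEq α] (T B U : Finset α) :
    ((T ∩ B) \ U).card + (B \ (T ∪ U)).card = (B \ U).card := by
  have h1 : (T ∩ B) \ U = (B \ U) ∩ T := by
    ext x; simp only [Finset.mem_sdiff, Finset.mem_inter]; tauto
  have h2 : B \ (T ∪ U) = (B \ U) \ T := by
    ext x; simp only [Finset.mem_sdiff, Finset.mem_union]; tauto
  rw [h1, h2, Finset.card_inter_add_card_sdiff]

/-- Singleton case: the defect of `(Γ₁, {T})` equals `e(insert T Γ₁) - e(Γ₁)`. -/
lemma collD_singleton {α : Type*} [DecidableEq α] {Γ₁ : Finset (Finset α)}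
    (h₁ : Γ₁.Nonempty) (T : Finset α) :
    collD Γ₁ {T} = collE (insert T Γ₁) - collE Γ₁ := by
  have hU : collU (insert T Γ₁) = T ∪ collU Γ₁ := collU_insert T Γ₁
  have hI : collI (insert T Γ₁) = T ∩ collI Γ₁ := collI_insert h₁ T
  have e1 : (T \ collU Γ₁).card + (collU Γ₁).card = (T ∪ collU Γ₁).card :=
    Finset.card_sdiff_add_card T (collU Γ₁)
  have e2 : (collI Γ₁ ∩ T).card + (collI Γ₁ \ T).card = (collI Γ₁).card :=
    Finset.card_inter_add_card_sdiff (collI Γ₁) T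
  rw [Finset.inter_comm] at e2
  unfold collD collE
  rw [hU, hI, collI_singleton, collU_singleton]
  push_cast
  linarith [e1, e2]

/-- Recursion identity for the defect. -/
lemma collD_rec {α : Type*} [DecidableEq α] {Γ₁ Γ₂ : Finset (Finset α)}
    (h₁ : Γ₁.Nonempty) (h₂ : Γ₂.Nonempty) (T : Finset α) :
    collD Γ₁ (insert T Γ₂) + collD (insert T Γ₁) Γ₂ = collD Γ₁ Γ₂ := by
  have hU₁ : collU (insert T Γ₁) = T ∪ collU Γ₁ := collU_insert T Γ₁
  have hU₂ : collU (insert T Γ₂) = T ∪ collU Γ₂ := collU_insert T Γ₂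
  have hI₁ : collI (insert T Γ₁) = T ∩ collI Γ₁ := collI_insert h₁ T
  have hI₂ : collI (insert T Γ₂) = T ∩ collI Γ₂ := collI_insert h₂ T
  have c1 := card_split T (collI Γ₂) (collU Γ₁)
  have c2 := card_split T (collI Γ₁) (collU Γ₂)
  unfold collD
  rw [hU₁, hU₂, hI₁, hI₂]
  push_cast
  push_cast at c1 c2
  linarith [c1, c2]

/-- An hke collection satisfies the duality equality for every partition. -/
lemma hke_duality {α : Type*} [DecidableEq α] (a : ℕ) :
    ∀ (n : ℕ) (Γ₁ Γ₂ : Finset (Finset α)), Γ₂.card ≤ n → Γ₁.Nonempty → Γ₂.Nonempty →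
      Disjoint Γ₁ Γ₂ → IsHKE (Γ₁ ∪ Γ₂) a → collD Γ₁ Γ₂ = 0 := by
  intro n
  induction n with
  | zero =>
    intro Γ₁ Γ₂ hn h₁ h₂ _ _
    exact absurd (Finset.card_pos.2 h₂) (by omega)
  | succ n ih =>
    intro Γ₁ Γ₂ hn h₁ h₂ hdisj hhke
    by_cases hcase : Γ₂.card = 1
    · obtain ⟨T, rfl⟩ := Finset.card_eq_one.1 hcase
      have hins : insert T Γ₁ = Γ₁ ∪ {T} := by
        ext x; simp [or_comm]
      have e1 : collE (insert T Γ₁) = 2 * (a : ℤ) := by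
        rw [hins]; exact hhke.2 _ le_rfl (h₁.mono Finset.subset_union_left)
      have e2 : collE Γ₁ = 2 * (a : ℤ) :=
        hhke.2 Γ₁ Finset.subset_union_left h₁
      rw [collD_singleton h₁ T, e1, e2]; ring
    · obtain ⟨T, hT⟩ := h₂
      have h₂' : (Γ₂.erase T).Nonempty := by
        rw [← Finset.card_pos, Finset.card_erase_of_mem hT]
        have := Finset.card_pos.2 ⟨T, hT⟩
        omega
      have hcard' : (Γ₂.erase T).card ≤ n := by
        rw [Finset.card_erase_of_mem hT]; omega
      have hTins : insert T (Γ₂.erase T) = Γ₂ := Finset.insert_erase hT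
      have hdisj' : Disjoint Γ₁ (Γ₂.erase T) :=
        hdisj.mono_right (Finset.erase_subset T Γ₂)
      have hdisj'' : Disjoint (insert T Γ₁) (Γ₂.erase T) := by
        rw [Finset.disjoint_left]
        intro x hx hx'
        rcases Finset.mem_insert.1 hx with rfl | hx
        · exact Finset.notMem_erase x Γ₂ hx'
        · exact (Finset.disjoint_left.1 hdisj') hx hx'
      have hsub1 : Γ₁ ∪ Γ₂.erase T ⊆ Γ₁ ∪ Γ₂ :=
        Finset.union_subset_union_right (Finset.erase_subset T Γ₂)
      have hsub2 : insert T Γ₁ ∪ Γ₂.erase T ⊆ Γ₁ ∪ Γ₂ := by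
        intro x hx
        rcases Finset.mem_union.1 hx with hx | hx
        · rcases Finset.mem_insert.1 hx with rfl | hx
          · exact Finset.mem_union_right _ hT
          · exact Finset.mem_union_left _ hx
        · exact Finset.mem_union_right _ (Finset.erase_subset T Γ₂ hx)
      have z1 : collD Γ₁ (Γ₂.erase T) = 0 :=
        ih Γ₁ (Γ₂.erase T) hcard' h₁ h₂' hdisj' (hhke.subset hsub1)
      have z2 : collD (insert T Γ₁) (Γ₂.erase T) = 0 :=
        ih (insert T Γ₁) (Γ₂.erase T) hcard' (Finset.insert_nonempty T Γ₁) h₂' hdisj'' (hhke.subset hsub2)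
      have := collD_rec h₁ h₂' T
      rw [hTins] at this
      linarith [this, z1, z2]

theorem stmt_13 {α : Type*} [DecidableEq α] (Γ : Finset (Finset α))
    (hcard : 2 ≤ Γ.card) (a : ℕ) (ha : 0 < a)
    (hsize : ∀ S ∈ Γ, S.card = a)
    (hhke : ∀ S ∈ Γ, IsHKE (Γ.erase S) a)
    (hnKE : collE Γ ≠ 2 * (a : ℤ)) :
    ∀ Γ₁ Γ₂ : Finset (Finset α),
      Γ₁ ∪ Γ₂ = Γ → Disjoint Γ₁ Γ₂ → Γ₁.Nonempty → Γ₂.Nonempty →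
      (collI Γ₁ \ collU Γ₂).card ≠ (collI Γ₂ \ collU Γ₁).card := by
  have key : ∀ (n : ℕ) (Γ₁ Γ₂ : Finset (Finset α)), Γ₂.card ≤ n →
      Γ₁ ∪ Γ₂ = Γ → Disjoint Γ₁ Γ₂ → Γ₁.Nonempty → Γ₂.Nonempty →
      collD Γ₁ Γ₂ ≠ 0 := by
    intro n
    induction n with
    | zero =>
      intro Γ₁ Γ₂ hn _ _ _ h₂
      have := Finset.card_pos.2 h₂
      omega
    | succ n ih =>
      intro Γ₁ Γ₂ hn hunion hdisj h₁ h₂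
      by_cases hcase : Γ₂.card = 1
      · obtain ⟨T, rfl⟩ := Finset.card_eq_one.1 hcase
        have hTΓ : T ∈ Γ := hunion ▸ Finset.mem_union_right Γ₁ (Finset.mem_singleton_self T)
        have hTn : T ∉ Γ₁ := fun h =>
          (Finset.disjoint_left.1 hdisj) h (Finset.mem_singleton_self T)
        have hΓ₁sub : Γ₁ ⊆ Γ.erase T := by
          intro x hx
          exact Finset.mem_erase.2 ⟨fun h => hTn (h ▸ hx), hunion ▸ Finset.mem_union_left _ hx⟩
        have e2 : collE Γ₁ = 2 * (a : ℤ) := (hhke T hTΓ).2 Γ₁ hΓ₁sub h₁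
        have hins : insert T Γ₁ = Γ := by
          rw [← hunion]; ext x; simp [or_comm]
        rw [collD_singleton h₁ T, hins, e2]
        intro h
        exact hnKE (by linarith)
      · obtain ⟨T, hT⟩ := h₂
        have hTΓ : T ∈ Γ := hunion ▸ Finset.mem_union_right Γ₁ hT
        have hTn : T ∉ Γ₁ := fun h => (Finset.disjoint_left.1 hdisj) h hT
        have h₂' : (Γ₂.erase T).Nonempty := by
          rw [← Finset.card_pos, Finset.card_erase_of_mem hT]
          have := Finset.card_pos.2 ⟨T, hT⟩
          omega
        have hcard' : (Γ₂.erase T).card ≤ n := by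
          rw [Finset.card_erase_of_mem hT]; omega
        have hTins : insert T (Γ₂.erase T) = Γ₂ := Finset.insert_erase hT
        have hdisj' : Disjoint Γ₁ (Γ₂.erase T) :=
          hdisj.mono_right (Finset.erase_subset T Γ₂)
        have hdisj'' : Disjoint (insert T Γ₁) (Γ₂.erase T) := by
          rw [Finset.disjoint_left]
          intro x hx hx'
          rcases Finset.mem_insert.1 hx with rfl | hx
          · exact Finset.notMem_erase x Γ₂ hx'
          · exact (Finset.disjoint_left.1 hdisj') hx hx'
        have hsub1 : Γ₁ ∪ Γ₂.erase T ⊆ Γ.erase T := by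
          intro x hx
          rcases Finset.mem_union.1 hx with hx | hx
          · exact Finset.mem_erase.2 ⟨fun h => hTn (h ▸ hx),
              hunion ▸ Finset.mem_union_left _ hx⟩
          · exact Finset.mem_erase.2 ⟨(Finset.mem_erase.1 hx).1,
              hunion ▸ Finset.mem_union_right _ ((Finset.erase_subset T Γ₂) hx)⟩
        have z1 : collD Γ₁ (Γ₂.erase T) = 0 :=
          hke_duality a (Γ₂.erase T).card Γ₁ (Γ₂.erase T) le_rfl h₁ h₂' hdisj'
            ((hhke T hTΓ).subset hsub1)
        have hunion' : insert T Γ₁ ∪ Γ₂.erase T = Γ := by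
          rw [Finset.insert_union, ← Finset.union_insert, hTins, hunion]
        have z2 : collD (insert T Γ₁) (Γ₂.erase T) ≠ 0 :=
          ih (insert T Γ₁) (Γ₂.erase T) hcard' hunion' hdisj'' (Finset.insert_nonempty T Γ₁) h₂'
        have hrec := collD_rec h₁ h₂' T
        rw [hTins] at hrec
        intro h
        apply z2
        linarith [hrec, z1, h]
  intro Γ₁ Γ₂ hunion hdisj h₁ h₂ hne
  have := key Γ₂.card Γ₁ Γ₂ le_rfl hunion hdisj h₁ h₂
  apply this
  unfold collD
  rw [hne]
  ring
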